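/- Let G be a simple graph on a finite vertex type V, let k, r be natural numbers, and let s ∈ V. Suppose H₁ and H₂ are sets of vertices such that each H_i contains s, the induced subgraph G[H_i] is connected, every vertex of H_i has at least k neighbors within H_i, and every vertex of H_i is at graph distance at most r from s in G. Then H₁ ∪ H₂ also satisfies all four properties. Consequently, any two inclusion-maximal such sets are equal, i.e., the seed-based engaged group (SEG) of s is unique. -/

import Mathlib

/-- H satisfies the user engagement constraint (connected induced subgraph with
minimum degree ≥ k) and the distance constraint (contains the seed s and every
vertex is within graph distance r from s). -/
def SEGProp {V : Type*} (G : SimpleGraph V) (k r : ℕ) (s : V) (H : Set V) : Prop :=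
  s ∈ H ∧ (G.induce H).Connected ∧
    (∀ v ∈ H, k ≤ (H ∩ G.neighborSet v).ncard) ∧
    (∀ v ∈ H, G.dist s v ≤ r)

/-- If H₁ and H₂ both contain the seed s, induce connected subgraphs with
minimum degree at least k, and lie within distance r of s, then so does
H₁ ∪ H₂; consequently any two inclusion-maximal such sets are equal, i.e.
the seed-based engaged group (SEG) of s is unique. -/
theorem seg_union_and_unique {V : Type*} [Fintype V] (G : SimpleGraph V)
    (k r : ℕ) (s : V) (H₁ H₂ : Set V)
    (h₁ : SEGProp G k r s H₁) (h₂ : SEGProp G k r s H₂) :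
    SEGProp G k r s (H₁ ∪ H₂) ∧
      ((∀ H : Set V, SEGProp G k r s H → H₁ ⊆ H → H = H₁) →
       (∀ H : Set V, SEGProp G k r s H → H₂ ⊆ H → H = H₂) →
       H₁ = H₂) := by
  obtain ⟨s1, c1, d1, r1⟩ := h₁
  obtain ⟨s2, c2, d2, r2⟩ := h₂
  have hU : SEGProp G k r s (H₁ ∪ H₂) := by
    refine ⟨Or.inl s1, SimpleGraph.induce_union_connected c1.preconnected c2.preconnected ⟨s, s1, s2⟩, ?_, ?_⟩
    · rintro v (hv | hv)
      · exact le_trans (d1 v hv) (Set.ncard_le_ncard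
          (Set.inter_subset_inter_left _ Set.subset_union_left) (Set.toFinite _))
      · exact le_trans (d2 v hv) (Set.ncard_le_ncard
          (Set.inter_subset_inter_left _ Set.subset_union_right) (Set.toFinite _))
    · rintro v (hv | hv)
      · exact r1 v hv
      · exact r2 v hv
  refine ⟨hU, fun m1 m2 => ?_⟩
  have e1 := m1 _ hU Set.subset_union_left
  have e2 := m2 _ hU Set.subset_union_right
  exact e1.symm.trans e2
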